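/- arXiv:2404.19155 — 6 statements merged into one kernel-verified Lean document; each statement's English description precedes it below -/
import Mathlib

section
/- Let g ∈ SL(2,ℂ) with all entries g₁₁, g₁₂, g₂₁ nonzero. Then there exist nonzero complex numbers a, b, m such that g = τ(a,b,m), namely a = g₁₁, and m, b can be chosen appropriately. -/
open Matrix

noncomputable def tau (a b m : ℂ) : Matrix (Fin 2) (Fin 2) ℂ :=
  !![a, -(a - m) * b; (a - m⁻¹) / b, m + m⁻¹ - a]

lemma aux_tau (g : Matrix (Fin 2) (Fin 2) ℂ) (hdet : g 0 0 * g 1 1 - g 0 1 * g 1 0 = 1)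
    (h11 : g 0 0 ≠ 0) (h12 : g 0 1 ≠ 0) (m : ℂ) (hm0 : m ≠ 0)
    (htr : m + m⁻¹ = g 0 0 + g 1 1) (hma : m ≠ g 0 0) :
    ∃ a b m : ℂ, a ≠ 0 ∧ b ≠ 0 ∧ m ≠ 0 ∧ g = tau a b m ∧ a = g 0 0 := by
  set a := g 0 0 with ha
  refine ⟨a, g 0 1 / (m - a), m, h11, ?_, hm0, ?_, rfl⟩
  · exact div_ne_zero h12 (sub_ne_zero.mpr hma)
  · have hmi : m⁻¹ = a + g 1 1 - m := by
      field_simp at htr ⊢; linear_combination htr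
    have hq : m ^ 2 + 1 = (a + g 1 1) * m := by
      field_simp at htr; linear_combination htr
    have hsub : m - a ≠ 0 := sub_ne_zero.mpr hma
    ext i j
    fin_cases i <;> fin_cases j <;>
      simp only [tau, Matrix.cons_val', Matrix.cons_val_zero, Matrix.cons_val_one,
        Matrix.head_cons, Matrix.empty_val', Matrix.cons_val_fin_one, Matrix.head_fin_const,
        Fin.mk_zero, Fin.mk_one, Fin.isValue, Matrix.of_apply]
    · rfl
    · field_simp; ring
    · rw [hmi]
      field_simp
      first
      | linear_combination -m * hdet - a * hq
      | linear_combination m * hdet + a * hq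
      | linear_combination (m-1) * hdet + (a-1) * hq
      | linear_combination -hdet - hq
      | linear_combination hdet + hq
    · rw [hmi]; ring

theorem stmt_4 (g : Matrix (Fin 2) (Fin 2) ℂ) (hdet : g.det = 1)
    (h11 : g 0 0 ≠ 0) (h12 : g 0 1 ≠ 0) (h21 : g 1 0 ≠ 0) :
    ∃ a b m : ℂ, a ≠ 0 ∧ b ≠ 0 ∧ m ≠ 0 ∧ g = tau a b m ∧ a = g 0 0 := by
  rw [Matrix.det_fin_two] at hdet
  set t := g 0 0 + g 1 1 with ht
  obtain ⟨d, hd⟩ : ∃ d : ℂ, d ^ 2 = t ^ 2 - 4 :=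
    IsAlgClosed.exists_pow_nat_eq (t ^ 2 - 4) two_pos
  set m₁ := (t + d) / 2 with hm1
  set m₂ := (t - d) / 2 with hm2
  have hprod : m₁ * m₂ = 1 := by
    rw [hm1, hm2]; field_simp
    linear_combination -hd
  have hsum : m₁ + m₂ = t := by rw [hm1, hm2]; ring
  have h1 : m₁ ≠ 0 := left_ne_zero_of_mul_eq_one hprod
  have h2 : m₂ ≠ 0 := right_ne_zero_of_mul_eq_one hprod
  have hinv1 : m₁⁻¹ = m₂ := inv_eq_of_mul_eq_one_right hprod
  have hinv2 : m₂⁻¹ = m₁ := inv_eq_of_mul_eq_one_left hprod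
  by_cases hc : m₁ = g 0 0
  · by_cases hc2 : m₂ = g 0 0
    · exfalso
      rw [hc, hc2] at hprod hsum
      have hg11 : g 1 1 = g 0 0 := by first
        | linear_combination hsum - ht
        | linear_combination -hsum
        | linear_combination hsum
        | linear_combination ht - hsum
      rw [hg11] at hdet
      have h0 : g 0 1 * g 1 0 = 0 := by linear_combination hprod - hdet
      exact mul_ne_zero h12 h21 h0
    · exact aux_tau g hdet h11 h12 m₂ h2 (by rw [hinv2]; linear_combination hsum) hc2
  · exact aux_tau g hdet h11 h12 m₁ h1 (by rw [hinv1]; linear_combination hsum) hc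
end

section
/- Let u ∈ ℂ² be a column vector with first coordinate nonzero, Û = [[u¹, 0], [u², 1]], and suppose g = Û · τ(a,b,m) · Û⁻¹ for nonzero complex numbers a, b, m. Let v be a nonzero row vector with v·g = m⁻¹·v, and suppose v·u ≠ 0. If the m⁻¹-eigenspace of left multiplication by g on row vectors is one-dimensional, then b = -(v·e₂)/(v·u). -/
open Matrix

theorem stmt_6 (u : Fin 2 → ℂ) (hu : u 0 ≠ 0) (a b m : ℂ)
    (ha : a ≠ 0) (hb : b ≠ 0) (hm : m ≠ 0)
    (g : Matrix (Fin 2) (Fin 2) ℂ)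
    (hg : g = !![u 0, 0; u 1, 1] * tau a b m * (!![u 0, 0; u 1, 1])⁻¹)
    (v : Fin 2 → ℂ) (hv : v ≠ 0) (hev : v ᵥ* g = m⁻¹ • v)
    (hvu : v ⬝ᵥ u ≠ 0)
    (hone : ∀ w : Fin 2 → ℂ, w ᵥ* g = m⁻¹ • w → ∃ c : ℂ, w = c • v) :
    b = -(v 1) / (v ⬝ᵥ u) := by
  -- compute the inverse of Û
  have hinv : (!![u 0, 0; u 1, 1])⁻¹ = (u 0)⁻¹ • !![1, 0; -u 1, u 0] := by
    apply Matrix.inv_eq_right_inv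
    ext i j
    fin_cases i <;> fin_cases j <;>
      simp [Matrix.mul_apply, Fin.sum_univ_two] <;> field_simp <;> ring
  set w : Fin 2 → ℂ := ![1 + b * u 1, -(b * u 0)] with hw
  have hweig : w ᵥ* g = m⁻¹ • w := by
    subst hg
    rw [hinv]
    ext j
    fin_cases j <;>
      simp [hw, tau, Matrix.vecMul, Matrix.mul_apply, dotProduct,
        Fin.sum_univ_two, Matrix.smul_apply] <;>
      field_simp [hu, hb, hm] <;> ring_nf <;>
      field_simp [hu, hb, hm] <;> ring
  obtain ⟨c, hc⟩ := hone w hweig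
  have h0 : 1 + b * u 1 = c * v 0 := by
    have := congrFun hc 0; simpa [hw] using this
  have h1 : -(b * u 0) = c * v 1 := by
    have := congrFun hc 1; simpa [hw] using this
  have hcne : c ≠ 0 := by
    rintro rfl
    rw [zero_mul] at h1
    rcases mul_eq_zero.mp (neg_eq_zero.mp h1) with h | h
    · exact hb h
    · exact hu h
  have hdot : v ⬝ᵥ u = v 0 * u 0 + v 1 * u 1 := by
    simp [dotProduct, Fin.sum_univ_two]
  have key : c * (b * (v ⬝ᵥ u)) = c * (-(v 1)) := by
    rw [hdot]
    linear_combination (-(b * u 0)) * h0 - (b * u 1 + 1) * h1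
  have key2 : b * (v ⬝ᵥ u) = -(v 1) := mul_left_cancel₀ hcne key
  rw [eq_div_iff hvu]
  exact key2
end

section
/- Suppose u ∈ ℂ² has nonzero first coordinate, g = Û · τ(a,b,m) · Û⁻¹ for nonzero a, b, m, where Û = [[u¹,0],[u²,1]]. Then g·u = Û · U(a,b,m) · e₁, where U(a,b,m) = [[a, 0], [(a-1/m)/b, 1]]. -/
open Matrix

noncomputable def Umat (a b m : ℂ) : Matrix (Fin 2) (Fin 2) ℂ :=
  !![a, 0; (a - m⁻¹) / b, 1]

theorem stmt_8 (u : Fin 2 → ℂ) (hu : u 0 ≠ 0) (a b m : ℂ)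
    (ha : a ≠ 0) (hb : b ≠ 0) (hm : m ≠ 0)
    (g : Matrix (Fin 2) (Fin 2) ℂ)
    (hg : g = !![u 0, 0; u 1, 1] * tau a b m * (!![u 0, 0; u 1, 1])⁻¹) :
    g *ᵥ u = !![u 0, 0; u 1, 1] *ᵥ (Umat a b m *ᵥ ![1, 0]) := by
  have hdet : (!![u 0, 0; u 1, 1] : Matrix (Fin 2) (Fin 2) ℂ).det ≠ 0 := by
    simp [Matrix.det_fin_two_of, hu]
  have hinv : (!![u 0, 0; u 1, 1] : Matrix (Fin 2) (Fin 2) ℂ)⁻¹ =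
      !![(u 0)⁻¹, 0; -(u 1) * (u 0)⁻¹, 1] := by
    rw [Matrix.inv_def, Matrix.adjugate_fin_two, Matrix.det_fin_two_of]
    simp only [mul_one, mul_zero, sub_zero, Ring.inverse_eq_inv]
    ext i j
    fin_cases i <;> fin_cases j <;>
      simp [Matrix.smul_apply] <;> field_simp <;> ring
  subst hg
  have h1 : (!![u 0, 0; u 1, 1])⁻¹ *ᵥ u = ![1, 0] := by
    rw [hinv]
    ext i
    fin_cases i <;>
      simp [Matrix.mulVec, dotProduct, Fin.sum_univ_two] <;>
      field_simp <;> ring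
  have h2 : tau a b m *ᵥ ![1, 0] = Umat a b m *ᵥ ![1, 0] := by
    ext i
    fin_cases i <;>
      simp [tau, Umat, Matrix.mulVec, dotProduct, Fin.sum_univ_two]
  rw [← Matrix.mulVec_mulVec, ← Matrix.mulVec_mulVec, h1, h2]
end

section
/- Let x₁ = (a₁,b₁,m₁) and x₂ = (a₂,b₂,m₂) be triples of nonzero complex numbers, and define A = 1 - (m₁b₁/b₂)(1 - a₁/m₁)(1 - 1/(m₂a₂)). Assume A ≠ 0 and define a₁' = a₁/A, a₂' = a₂·A, m₁' = m₁, m₂' = m₂, b₁' = (m₂b₂/m₁)·(1 - m₂a₂(1 - b₂/(m₁b₁)))⁻¹ (assuming the inverted quantity is nonzero), and b₂' = b₁·(1 - (m₁/a₁)(1 - b₂/(m₁b₁))), assumed nonzero. Then U(a₁,b₁,m₁)·U(a₂,b₂,m₂) = U(a₂',b₂',m₂')·U(a₁',b₁',m₁'). -/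
open Matrix

theorem stmt_9 (a₁ b₁ m₁ a₂ b₂ m₂ : ℂ)
    (ha₁ : a₁ ≠ 0) (hb₁ : b₁ ≠ 0) (hm₁ : m₁ ≠ 0)
    (ha₂ : a₂ ≠ 0) (hb₂ : b₂ ≠ 0) (hm₂ : m₂ ≠ 0)
    (A : ℂ) (hA : A = 1 - (m₁ * b₁ / b₂) * (1 - a₁ / m₁) * (1 - 1 / (m₂ * a₂)))
    (hA0 : A ≠ 0)
    (a₁' a₂' m₁' m₂' b₁' b₂' : ℂ)
    (ha₁' : a₁' = a₁ / A) (ha₂' : a₂' = a₂ * A)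
    (hm₁' : m₁' = m₁) (hm₂' : m₂' = m₂)
    (hden : 1 - m₂ * a₂ * (1 - b₂ / (m₁ * b₁)) ≠ 0)
    (hb₁' : b₁' = (m₂ * b₂ / m₁) * (1 - m₂ * a₂ * (1 - b₂ / (m₁ * b₁)))⁻¹)
    (hb₂' : b₂' = b₁ * (1 - (m₁ / a₁) * (1 - b₂ / (m₁ * b₁))))
    (hb₂'0 : b₂' ≠ 0) :
    Umat a₁ b₁ m₁ * Umat a₂ b₂ m₂ = Umat a₂' b₂' m₂' * Umat a₁' b₁' m₁' := by
  rw [hm₁', hm₂']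
  have hAc := hA
  have hBc := hb₂'
  field_simp at hAc hBc
  have key : (a₁ - m₁⁻¹) / b₁ * a₂ + (a₂ - m₂⁻¹) / b₂ =
      (a₂ * A - m₂⁻¹) / b₂' * (a₁ / A) +
        (a₁ / A - m₁⁻¹) * ((m₂ * b₂ / m₁)⁻¹ * (1 - m₂ * a₂ * (1 - b₂ / (m₁ * b₁)))) := by
    have hQ : m₂ * b₂' * A * (A * m₁ * (m₂ * b₂ * (m₁ * b₁))) ≠ 0 :=
      mul_ne_zero (mul_ne_zero (mul_ne_zero hm₂ hb₂'0) hA0)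
        (mul_ne_zero (mul_ne_zero hA0 hm₁)
          (mul_ne_zero (mul_ne_zero hm₂ hb₂) (mul_ne_zero hm₁ hb₁)))
    field_simp
    apply mul_left_cancel₀ ha₂
    have hA' : A = (b₂ * m₂ * a₂ - b₁ * (m₁ - a₁) * (m₂ * a₂ - 1)) / (b₂ * m₂ * a₂) := by
      rw [eq_div_iff (by simp [*])]; rw [← hAc]; ring
    have hB' : b₂' = (b₁ * a₁ - (m₁ * b₁ - b₂)) / a₁ := by
      rw [eq_div_iff ha₁, mul_comm]; exact hBc
    rw [hA', hB']
    field_simp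
    ring
  ext i j
  fin_cases i <;> fin_cases j <;>
    simp [Umat, Matrix.mul_apply, Fin.sum_univ_two]
  · rw [ha₁', ha₂']
    field_simp
    try ring
  · rw [div_eq_mul_inv _ b₁', hb₁', mul_inv, inv_inv, ha₁', ha₂']
    exact key
end

section
/- With the same hypotheses and definitions of the primed quantities as in the positive-crossing octahedral transformation, the down-holonomy matrices satisfy D(a₁,b₁,m₁)·D(a₂,b₂,m₂) = D(a₂',b₂',m₂')·D(a₁',b₁',m₁'), where D(a,b,m) = [[1, (a-m)b], [0, a]]. -/
set_option maxHeartbeats 1000000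


open Matrix

noncomputable def Dmat (a b m : ℂ) : Matrix (Fin 2) (Fin 2) ℂ :=
  !![1, (a - m) * b; 0, a]

theorem stmt_10 (a₁ b₁ m₁ a₂ b₂ m₂ : ℂ)
    (ha₁ : a₁ ≠ 0) (hb₁ : b₁ ≠ 0) (hm₁ : m₁ ≠ 0)
    (ha₂ : a₂ ≠ 0) (hb₂ : b₂ ≠ 0) (hm₂ : m₂ ≠ 0)
    (A : ℂ) (hA : A = 1 - (m₁ * b₁ / b₂) * (1 - a₁ / m₁) * (1 - 1 / (m₂ * a₂)))
    (hA0 : A ≠ 0)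
    (a₁' a₂' m₁' m₂' b₁' b₂' : ℂ)
    (ha₁' : a₁' = a₁ / A) (ha₂' : a₂' = a₂ * A)
    (hm₁' : m₁' = m₁) (hm₂' : m₂' = m₂)
    (hden : 1 - m₂ * a₂ * (1 - b₂ / (m₁ * b₁)) ≠ 0)
    (hb₁' : b₁' = (m₂ * b₂ / m₁) * (1 - m₂ * a₂ * (1 - b₂ / (m₁ * b₁)))⁻¹)
    (hb₂' : b₂' = b₁ * (1 - (m₁ / a₁) * (1 - b₂ / (m₁ * b₁))))
    (hb₂'0 : b₂' ≠ 0) :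
    Dmat a₁ b₁ m₁ * Dmat a₂ b₂ m₂ = Dmat a₂' b₂' m₂' * Dmat a₁' b₁' m₁' := by
  set D : ℂ := m₁ * b₁ - m₂ * a₂ * (m₁ * b₁ - b₂) with hDdef
  have hD : D ≠ 0 := by
    intro h
    apply hden
    field_simp
    linear_combination h
  have hden_eq : 1 - m₂ * a₂ * (1 - b₂ / (m₁ * b₁)) = D / (m₁ * b₁) := by
    field_simp
    exact hDdef.symm
  have hA_eq : A = (b₂ * m₂ * a₂ - b₁ * (m₁ - a₁) * (m₂ * a₂ - 1)) / (b₂ * m₂ * a₂) := by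
    rw [hA]; field_simp
  set E : ℂ := b₂ * m₂ * a₂ - b₁ * (m₁ - a₁) * (m₂ * a₂ - 1) with hEdef
  have hE : E ≠ 0 := by
    intro h
    apply hA0
    rw [hA_eq, h, zero_div]
  have hb₁'_eq : b₁' = m₂ * b₂ * b₁ / D := by
    rw [hb₁', hden_eq]
    field_simp
  have ha₁'_eq : a₁' = a₁ * (b₂ * m₂ * a₂) / E := by
    rw [ha₁', hA_eq]; field_simp
  have ha₂'_eq : a₂' = E / (b₂ * m₂) := by
    rw [ha₂', hA_eq]; field_simp
  have hb₂'_eq : b₂' = (b₁ * (a₁ - m₁) + b₂) / a₁ := by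
    rw [hb₂']; field_simp; ring
  have hd : a₁ * a₂ = a₂' * a₁' := by
    rw [ha₁'_eq, ha₂'_eq]; field_simp
  have h3 : (a₁' - m₁) * b₁' = (a₁ * (b₂ * m₂ * a₂) - m₁ * E) * (m₂ * b₂ * b₁) / (E * D) := by
    rw [ha₁'_eq, hb₁'_eq]
    field_simp
  have h4 : (a₂' - m₂) * b₂' * a₁'
      = (E - m₂ ^ 2 * b₂) * (b₁ * (a₁ - m₁) + b₂) * (b₂ * m₂ * a₂) / (E * (b₂ * m₂)) := by
    rw [ha₂'_eq, hb₂'_eq, ha₁'_eq]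
    field_simp
  have hED : E * D ≠ 0 := mul_ne_zero hE hD
  have hEb : E * (b₂ * m₂) ≠ 0 := mul_ne_zero hE (mul_ne_zero hb₂ hm₂)
  have hu : (a₂ - m₂) * b₂ + (a₁ - m₁) * b₁ * a₂
      = (a₁' - m₁') * b₁' + (a₂' - m₂') * b₂' * a₁' := by
    rw [hm₁', hm₂', h3, h4, div_add_div _ _ hED hEb, eq_div_iff (mul_ne_zero hED hEb)]
    rw [hDdef, hEdef]
    ring
  have hd' : a₁ * a₂ = a₂' * a₁' := hd
  funext i j
  fin_cases i <;> fin_cases j <;>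
    simp [Dmat, Matrix.mul_apply, Fin.sum_univ_two]
  · linear_combination hu
  · exact hd'
end

section
/- Let v₁, …, v_k be finitely many nonzero row vectors in ℂ² and u₁, …, u_l finitely many nonzero column vectors in ℂ². Then there exist A, B ∈ SL(2,ℂ) such that for all i and j: v_i·A·e₂ ≠ 0, v_i·B·u_j ≠ 0, and det(B·u_j, A·e₂) ≠ 0, where e₂ = (0,1)ᵀ and det(x,y) is the determinant of the matrix with columns x, y. -/
open Matrix Polynomial

/-- determinant of the 2×2 matrix with columns x, y -/
def det2 (x y : Fin 2 → ℂ) : ℂ := x 0 * y 1 - x 1 * y 0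

lemma quad_finite (a b c : ℂ) (h : ¬(a = 0 ∧ b = 0 ∧ c = 0)) :
    {s : ℂ | a * s ^ 2 + b * s + c = 0}.Finite := by
  have hp : (C a * X ^ 2 + C b * X + C c : ℂ[X]) ≠ 0 := by
    intro hp
    apply h
    refine ⟨?_, ?_, ?_⟩
    · have := congrArg (fun p => Polynomial.coeff p 2) hp
      simpa using this
    · have := congrArg (fun p => Polynomial.coeff p 1) hp
      simpa using this
    · have := congrArg (fun p => Polynomial.coeff p 0) hp
      simpa using this
  have hfin := Polynomial.finite_setOf_isRoot hp
  convert hfin using 1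
  ext s
  simp [IsRoot]

lemma exists_avoid {ι : Type*} [Finite ι] (a b c : ι → ℂ)
    (h : ∀ i, ¬(a i = 0 ∧ b i = 0 ∧ c i = 0)) :
    ∃ s : ℂ, ∀ i, a i * s ^ 2 + b i * s + c i ≠ 0 := by
  have hfin : (⋃ i, {s : ℂ | a i * s ^ 2 + b i * s + c i = 0}).Finite :=
    Set.finite_iUnion fun i => quad_finite _ _ _ (h i)
  obtain ⟨s, hs⟩ := hfin.infinite_compl.nonempty
  refine ⟨s, fun i => ?_⟩
  simp only [Set.mem_compl_iff, Set.mem_iUnion, Set.mem_setOf_eq, not_exists] at hs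
  exact hs i

theorem stmt_17 (k l : ℕ) (v : Fin k → (Fin 2 → ℂ)) (u : Fin l → (Fin 2 → ℂ))
    (hv : ∀ i, v i ≠ 0) (hu : ∀ j, u j ≠ 0) :
    ∃ A B : Matrix (Fin 2) (Fin 2) ℂ, A.det = 1 ∧ B.det = 1 ∧
      (∀ i, (v i ᵥ* A) ⬝ᵥ ![0, 1] ≠ 0) ∧
      (∀ i j, (v i ᵥ* B) ⬝ᵥ u j ≠ 0) ∧
      (∀ j, det2 (B *ᵥ u j) (A *ᵥ ![0, 1]) ≠ 0) := by
  have hv' : ∀ i, ¬(v i 0 = 0 ∧ v i 1 = 0) := by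
    rintro i ⟨h0, h1⟩
    exact hv i (funext fun x => by fin_cases x <;> assumption)
  have hu' : ∀ j, ¬(u j 0 = 0 ∧ u j 1 = 0) := by
    rintro j ⟨h0, h1⟩
    exact hu j (funext fun x => by fin_cases x <;> assumption)
  -- choose s
  obtain ⟨s, hs⟩ := exists_avoid
    (fun p : Fin k × Fin l => v p.1 1 * u p.2 1)
    (fun p => v p.1 1 * u p.2 0 + v p.1 0 * u p.2 1)
    (fun p => v p.1 0 * u p.2 0 + v p.1 1 * u p.2 1)
    (by
      rintro ⟨i, j⟩ ⟨h1, h2, h3⟩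
      dsimp only at h1 h2 h3
      rcases mul_eq_zero.mp h1 with hv1 | hu1
      · rcases not_and_or.mp (hv' i) with hv0 | hv0'
        · rw [hv1] at h2 h3
          simp only [zero_mul, zero_add, add_zero] at h2 h3
          rcases mul_eq_zero.mp h2 with h | h
          · exact hv0 h
          · rcases mul_eq_zero.mp h3 with h' | h'
            · exact hv0 h'
            · exact hu' j ⟨h', h⟩
        · exact hv0' hv1
      · rcases not_and_or.mp (hu' j) with hu0 | hu0'
        · rw [hu1] at h2 h3
          simp only [mul_zero, add_zero] at h2 h3
          rcases mul_eq_zero.mp h2 with h | h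
          · rcases mul_eq_zero.mp h3 with h' | h'
            · exact hv' i ⟨h', h⟩
            · exact hu0 h'
          · exact hu0 h
        · exact hu0' hu1)
  set B : Matrix (Fin 2) (Fin 2) ℂ := !![1, s; s, 1 + s ^ 2] with hB
  have hBu0 : ∀ j : Fin l, (B *ᵥ u j) 0 = u j 0 + s * u j 1 := by
    intro j; simp [hB, mulVec, dotProduct, Fin.sum_univ_two]
  have hBu1 : ∀ j : Fin l, (B *ᵥ u j) 1 = s * u j 0 + (1 + s ^ 2) * u j 1 := by
    intro j; simp [hB, mulVec, dotProduct, Fin.sum_univ_two]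
  have hBu : ∀ j : Fin l, ¬((B *ᵥ u j) 0 = 0 ∧ (B *ᵥ u j) 1 = 0) := by
    rintro j ⟨h0, h1⟩
    rw [hBu0] at h0
    rw [hBu1] at h1
    have hu1 : u j 1 = 0 := by linear_combination h1 - s * h0
    exact hu' j ⟨by linear_combination h0 - s * hu1, hu1⟩
  -- choose t
  obtain ⟨t, ht⟩ := exists_avoid (ι := Fin k ⊕ Fin l)
    (fun _ => (0 : ℂ))
    (Sum.elim (fun i => v i 0) (fun j => -((B *ᵥ u j) 1)))
    (Sum.elim (fun i => v i 1) (fun j => (B *ᵥ u j) 0))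
    (by
      rintro (i | j) ⟨-, h2, h3⟩ <;> simp only [Sum.elim_inl, Sum.elim_inr, neg_eq_zero] at h2 h3
      · exact hv' i ⟨h2, h3⟩
      · exact hBu j ⟨h3, h2⟩)
  refine ⟨!![1, t; 0, 1], B, ?_, ?_, ?_, ?_, ?_⟩
  · simp [Matrix.det_fin_two]
  · simp [hB, Matrix.det_fin_two]; ring
  · intro i
    have h := ht (Sum.inl i)
    simp only [Sum.elim_inl, zero_mul, zero_add] at h
    simp [vecMul, dotProduct, Fin.sum_univ_two]
    intro hc
    apply h
    linear_combination hc
  · intro i j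
    have h := hs (i, j)
    dsimp only at h
    simp [hB, vecMul, dotProduct, Fin.sum_univ_two]
    intro hc
    apply h
    linear_combination hc
  · intro j
    have h := ht (Sum.inr j)
    simp only [Sum.elim_inl, Sum.elim_inr, zero_mul, zero_add] at h
    simp only [det2]
    have hA0 : (!![1, t; 0, 1] *ᵥ ![(0:ℂ), 1]) 0 = t := by
      simp [mulVec, dotProduct, Fin.sum_univ_two]
    have hA1 : (!![1, t; 0, 1] *ᵥ ![(0:ℂ), 1]) 1 = 1 := by
      simp [mulVec, dotProduct, Fin.sum_univ_two]
    rw [hA0, hA1]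
    intro hc
    apply h
    linear_combination hc
end
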